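/- For every integer k ≥ 1, all x, y ∈ ℝⁿ and every t > 0, the functions A_k satisfy the recursive system of partial differential equations ∂A_k/∂t (x,y,t) = D Δ_x A_k(x,y,t) − λ A_k(x,y,t) + λ B A_{k−1}(x,y,t), where Δ_x is the Laplacian in the variable x; moreover A_0 satisfies ∂A_0/∂t = D Δ_x A_0 − λ A_0 for t > 0. -/

import Mathlib

open Real MeasureTheory Set

/-- The generation-`k` expectation density of the branching diffusion:
`A_k(x,y,t) = ((λBt)^k / k!) e^{-λt} (4πDt)^{-n/2} exp(-|x-y|²/(4Dt))`. -/
noncomputable def branchDensity (n : ℕ) (lam D B : ℝ) (k : ℕ)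
    (x y : EuclideanSpace ℝ (Fin n)) (t : ℝ) : ℝ :=
  ((lam * B * t) ^ k / (Nat.factorial k : ℝ)) * Real.exp (-lam * t) *
    (4 * π * D * t) ^ (-(n : ℝ) / 2) * Real.exp (-‖x - y‖ ^ 2 / (4 * D * t))

/-- The Laplacian of `f : ℝⁿ → ℝ` at `x`, as the sum of the second partial
derivatives along the coordinate directions. -/
noncomputable def laplacian (n : ℕ) (f : EuclideanSpace ℝ (Fin n) → ℝ)
    (x : EuclideanSpace ℝ (Fin n)) : ℝ :=
  ∑ i : Fin n,
    deriv (deriv (fun s : ℝ => f (x + s • EuclideanSpace.single i (1:ℝ)))) 0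

/-! ### Auxiliary lemmas -/

lemma norm_expand {n : ℕ} (x y : EuclideanSpace ℝ (Fin n)) (i : Fin n) (s : ℝ) :
    ‖x + s • EuclideanSpace.single i (1:ℝ) - y‖ ^ 2
      = ‖x - y‖ ^ 2 + 2 * ((x - y) i) * s + s ^ 2 := by
  have h : x + s • EuclideanSpace.single i (1:ℝ) - y
      = (x - y) + s • EuclideanSpace.single i (1:ℝ) := by abel
  rw [h, norm_add_sq_real]
  have h1 : (inner ℝ (x - y) (s • EuclideanSpace.single i (1:ℝ)) : ℝ) = s * (x - y) i := by
    rw [real_inner_smul_right]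
    have := EuclideanSpace.inner_single_right (𝕜 := ℝ) i 1 (x - y)
    simp only [RCLike.star_def, starRingEnd_apply, star_trivial, one_mul] at this
    rw [this]
  have h2 : ‖s • EuclideanSpace.single i (1:ℝ)‖ ^ 2 = s ^ 2 := by
    rw [norm_smul, EuclideanSpace.norm_single]
    simp [sq_abs]
  rw [h1, h2]
  ring

lemma gauss_second_deriv (E q a c : ℝ) (hc : c ≠ 0) :
    deriv (deriv (fun s : ℝ => E * Real.exp (-(q + 2*a*s + s^2) / c))) 0
      = E * Real.exp (-q / c) * (4*a^2/c^2 - 2/c) := by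
  have hpoly : ∀ s : ℝ, HasDerivAt (fun s : ℝ => -(q + 2*a*s + s^2) / c)
      (-(2*a + 2*s) / c) s := by
    intro s
    have h1 : HasDerivAt (fun s : ℝ => q + 2*a*s + s^2) (2*a + 2*s) s := by
      have h2 := (((hasDerivAt_id s).const_mul (2*a)).const_add q).add (hasDerivAt_pow 2 s)
      simp only [Pi.add_def] at h2
      have : (fun s : ℝ => q + 2*a*s + s^2) = fun s : ℝ => q + 2*a * s + s^2 := rfl
      exact h2.congr_deriv (by push_cast; ring)
    simpa [neg_div] using (h1.neg.div_const c)
  have hd : deriv (fun s : ℝ => E * Real.exp (-(q + 2*a*s + s^2) / c))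
      = fun s => E * (Real.exp (-(q + 2*a*s + s^2) / c) * (-(2*a + 2*s) / c)) := by
    funext s
    exact (((hpoly s).exp).const_mul E).deriv
  rw [hd]
  have hu : HasDerivAt (fun s : ℝ => Real.exp (-(q + 2*a*s + s^2) / c))
      (Real.exp (-(q + 2*a*0 + 0^2) / c) * (-(2*a + 2*0) / c)) 0 := (hpoly 0).exp
  have hv : HasDerivAt (fun s : ℝ => -(2*a + 2*s) / c) (-(0 + 2*1)/c) 0 := by
    have h3 : HasDerivAt (fun s : ℝ => 2*a + 2*s) (0 + 2*1) 0 := by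
      simpa using ((hasDerivAt_id (0:ℝ)).const_mul 2).const_add (2*a)
    exact h3.neg.div_const c
  have hfin := ((hu.mul hv).const_mul E).deriv
  simp only [Pi.mul_def] at hfin
  rw [hfin]
  rw [show -(q + 2*a*0 + 0^2) / c = -q / c by ring]
  field_simp
  ring

lemma laplacian_branch (n : ℕ) (lam D B : ℝ) (hD : 0 < D) (k : ℕ)
    (x y : EuclideanSpace ℝ (Fin n)) (t : ℝ) (ht : 0 < t) :
    laplacian n (fun x' => branchDensity n lam D B k x' y t) x
      = (4 * ‖x - y‖ ^ 2 / (4*D*t)^2 - 2*(n:ℝ)/(4*D*t)) *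
          branchDensity n lam D B k x y t := by
  have hc : (4*D*t : ℝ) ≠ 0 := by positivity
  unfold laplacian
  have key : ∀ i : Fin n,
      deriv (deriv (fun s : ℝ =>
        branchDensity n lam D B k (x + s • EuclideanSpace.single i (1:ℝ)) y t)) 0
      = branchDensity n lam D B k x y t *
          (4*((x - y) i)^2/(4*D*t)^2 - 2/(4*D*t)) := by
    intro i
    have hfun : (fun s : ℝ =>
        branchDensity n lam D B k (x + s • EuclideanSpace.single i (1:ℝ)) y t)
        = fun s : ℝ =>
          (((lam * B * t) ^ k / (Nat.factorial k : ℝ)) * Real.exp (-lam * t) *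
            (4 * π * D * t) ^ (-(n : ℝ) / 2)) *
          Real.exp (-(‖x - y‖ ^ 2 + 2 * ((x - y) i) * s + s ^ 2) / (4 * D * t)) := by
      funext s
      unfold branchDensity
      rw [norm_expand]
    rw [hfun, gauss_second_deriv _ _ _ _ hc]
    unfold branchDensity
    ring
  rw [Finset.sum_congr rfl (fun i _ => key i)]
  rw [← Finset.mul_sum]
  have hq : ∑ i : Fin n, ((x - y) i) ^ 2 = ‖x - y‖ ^ 2 := by
    rw [EuclideanSpace.norm_eq, Real.sq_sqrt (by positivity)]
    simp [sq_abs]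
  have hsum : ∑ i : Fin n, (4*((x - y) i)^2/(4*D*t)^2 - 2/(4*D*t))
      = 4 * ‖x - y‖ ^ 2 / (4*D*t)^2 - 2*(n:ℝ)/(4*D*t) := by
    rw [Finset.sum_sub_distrib, Finset.sum_const, Finset.card_univ, Fintype.card_fin,
      nsmul_eq_mul]
    rw [← Finset.sum_div, ← Finset.mul_sum, hq]
    ring
  rw [hsum]
  ring

lemma branch_time_deriv (n : ℕ) (lam D B : ℝ) (hD : 0 < D) (k : ℕ)
    (x y : EuclideanSpace ℝ (Fin n)) (t : ℝ) (ht : 0 < t) :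
    deriv (fun τ => branchDensity n lam D B k x y τ) t
      = ((k:ℝ)/t - lam - (n:ℝ)/(2*t) + ‖x - y‖ ^ 2/(4*D*t^2)) *
          branchDensity n lam D B k x y t := by
  have htne : t ≠ 0 := ne_of_gt ht
  have hct : (4*D*t : ℝ) ≠ 0 := by positivity
  have hpt : (4*π*D*t : ℝ) ≠ 0 := by
    have := Real.pi_pos
    positivity
  have hfac : (Nat.factorial k : ℝ) ≠ 0 := by
    exact_mod_cast Nat.factorial_ne_zero k
  have h1 : HasDerivAt (fun τ : ℝ => (lam * B * τ) ^ k / (Nat.factorial k : ℝ))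
      (((k:ℝ) * (lam * B * t) ^ (k-1) * (lam * B)) / (Nat.factorial k : ℝ)) t := by
    have := (((hasDerivAt_id t).const_mul (lam*B)).pow k).div_const (Nat.factorial k : ℝ)
    simpa using this
  have h2 : HasDerivAt (fun τ : ℝ => Real.exp (-lam * τ)) (Real.exp (-lam * t) * (-lam)) t := by
    simpa using ((hasDerivAt_id t).const_mul (-lam)).exp
  have h3 : HasDerivAt (fun τ : ℝ => (4 * π * D * τ) ^ (-(n:ℝ)/2))
      ((4*π*D) * (-(n:ℝ)/2) * (4*π*D*t) ^ ((-(n:ℝ)/2) - 1)) t := by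
    simpa using ((hasDerivAt_id t).const_mul (4*π*D)).rpow_const (Or.inl hpt)
  have h4 : HasDerivAt (fun τ : ℝ => Real.exp (-‖x - y‖ ^ 2 / (4 * D * τ)))
      (Real.exp (-‖x - y‖ ^ 2 / (4 * D * t)) *
        ((0 * (4*D*t) - (-‖x - y‖ ^ 2) * (4*D)) / (4*D*t)^2)) t := by
    have h := ((hasDerivAt_const t (-‖x - y‖ ^ 2)).div
      ((hasDerivAt_id t).const_mul (4*D)) hct).exp
    simp only [id_eq, mul_one] at h
    exact h
  have H := ((h1.mul h2).mul h3).mul h4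
  simp only [Pi.mul_def] at H
  unfold branchDensity
  rw [H.deriv, Real.rpow_sub_one hpt]
  rcases Nat.eq_zero_or_pos k with hk0 | hkpos
  · subst hk0
    simp only [Nat.cast_zero, pow_zero, Nat.factorial_zero, Nat.cast_one, zero_mul, zero_div,
      zero_add]
    field_simp
    ring
  · obtain ⟨j, rfl⟩ : ∃ j, k = j + 1 := ⟨k-1, (Nat.succ_pred_eq_of_pos hkpos).symm⟩
    simp only [Nat.add_sub_cancel]
    rw [pow_succ]
    push_cast [Nat.factorial_succ]
    field_simp
    ring

lemma prev_step (n : ℕ) (lam D B : ℝ) (k : ℕ) (hk : 1 ≤ k)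
    (x y : EuclideanSpace ℝ (Fin n)) (t : ℝ) (ht : t ≠ 0) :
    lam * B * branchDensity n lam D B (k-1) x y t
      = ((k:ℝ)/t) * branchDensity n lam D B k x y t := by
  obtain ⟨j, rfl⟩ : ∃ j, k = j + 1 := ⟨k-1, (Nat.succ_pred_eq_of_pos hk).symm⟩
  simp only [Nat.add_sub_cancel]
  unfold branchDensity
  rw [pow_succ]
  push_cast [Nat.factorial_succ]
  have hfac : (Nat.factorial j : ℝ) ≠ 0 := by exact_mod_cast Nat.factorial_ne_zero j
  field_simp
  ring

/-- The densities `A_k` satisfy the recursive system of PDEs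
`∂A_k/∂t = D Δ_x A_k − λ A_k + λ B A_{k−1}` for `k ≥ 1`, and
`∂A_0/∂t = D Δ_x A_0 − λ A_0`. -/
theorem branchDensity_pde
    (n : ℕ) (hn : 1 ≤ n) (lam D B : ℝ) (hlam : 0 < lam) (hD : 0 < D) (hB : 0 < B)
    (k : ℕ) (hk : 1 ≤ k) (x y : EuclideanSpace ℝ (Fin n)) (t : ℝ) (ht : 0 < t) :
    (deriv (fun τ => branchDensity n lam D B k x y τ) t =
      D * laplacian n (fun x' => branchDensity n lam D B k x' y t) x
        - lam * branchDensity n lam D B k x y t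
        + lam * B * branchDensity n lam D B (k - 1) x y t) ∧
    (deriv (fun τ => branchDensity n lam D B 0 x y τ) t =
      D * laplacian n (fun x' => branchDensity n lam D B 0 x' y t) x
        - lam * branchDensity n lam D B 0 x y t) := by
  have htne : t ≠ 0 := ne_of_gt ht
  have hDne : D ≠ 0 := ne_of_gt hD
  constructor
  · rw [branch_time_deriv n lam D B hD k x y t ht,
      laplacian_branch n lam D B hD k x y t ht,
      prev_step n lam D B k hk x y t htne]
    field_simp
    ring
  · rw [branch_time_deriv n lam D B hD 0 x y t ht,
      laplacian_branch n lam D B hD 0 x y t ht]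
    simp only [Nat.cast_zero, zero_div, zero_sub]
    field_simp
    ring
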